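/- arXiv:2604.02611 — 7 statements merged into one kernel-verified Lean document; each statement's English description precedes it below -/
import Mathlib

section
/- Let N be a positive integer, T ⊆ [N] with |T| ≥ N/2, φ : [N] → [N] an arbitrary function, and π a uniformly random permutation of [N]. Then the probability that there exists ℓ ∈ T with φ(ℓ) = π(ℓ) is at least 1/4. -/
open Finset Equiv

private lemma card_filter_eq_of_mul {N : ℕ} (p q : Perm (Fin N) → Prop)
    [DecidablePred p] [DecidablePred q]
    (u : Perm (Fin N)) (hu : u * u = 1)
    (hpq : ∀ π, p π → q (u * π)) (hqp : ∀ π, q π → p (u * π)) :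
    (univ.filter p).card = (univ.filter q).card := by
  apply Finset.card_bij (fun π _ => u * π)
  · intro π hπ
    simp only [mem_filter, mem_univ, true_and] at *
    exact hpq π hπ
  · intro π₁ _ π₂ _ h
    exact mul_left_cancel h
  · intro σ hσ
    simp only [mem_filter, mem_univ, true_and] at hσ
    exact ⟨u * σ, by
      simp only [mem_filter, mem_univ, true_and]
      exact hqp σ hσ, by rw [← mul_assoc, hu, one_mul]⟩

private lemma fixCard {N : ℕ} (hN : 0 < N) (a b : Fin N) :
    (univ.filter fun π : Perm (Fin N) => π a = b).card = Nat.factorial (N - 1) := by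
  have hbij : ∀ b' : Fin N,
      (univ.filter fun π : Perm (Fin N) => π a = b').card
        = (univ.filter fun π : Perm (Fin N) => π a = b).card := by
    intro b'
    refine card_filter_eq_of_mul _ _ (Equiv.swap b' b) (Equiv.swap_mul_self _ _) ?_ ?_
    · intro π h
      show (Equiv.swap b' b) (π a) = b
      rw [h, Equiv.swap_apply_left]
    · intro π h
      show (Equiv.swap b' b) (π a) = b'
      rw [h, Equiv.swap_apply_right]
  have hsum : ∑ b' : Fin N, (univ.filter fun π : Perm (Fin N) => π a = b').card
      = Nat.factorial N := by
    rw [← Finset.card_eq_sum_card_fiberwise (fun π _ => mem_univ (π a))]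
    simp [Fintype.card_perm]
  rw [Finset.sum_congr rfl fun b' _ => hbij b', Finset.sum_const, card_univ,
    Fintype.card_fin, smul_eq_mul] at hsum
  obtain ⟨n, rfl⟩ : ∃ n, N = n + 1 := ⟨N - 1, by omega⟩
  rw [Nat.factorial_succ] at hsum
  simpa using Nat.eq_of_mul_eq_mul_left (by omega) hsum

private lemma pairCard {N : ℕ} {a a' b b' : Fin N} (ha : a ≠ a') (hb : b ≠ b') :
    (univ.filter fun π : Perm (Fin N) => π a = b ∧ π a' = b').card = Nat.factorial (N - 2) := by
  have hN2 : 2 ≤ N := by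
    have hbv : (b : ℕ) ≠ (b' : ℕ) := fun h => hb (Fin.ext h)
    have := b.isLt; have := b'.isLt; omega
  have hbij : ∀ c : Fin N, c ≠ b →
      (univ.filter fun π : Perm (Fin N) => π a = b ∧ π a' = c).card
        = (univ.filter fun π : Perm (Fin N) => π a = b ∧ π a' = b').card := by
    intro c hc
    refine card_filter_eq_of_mul _ _ (Equiv.swap c b') (Equiv.swap_mul_self _ _) ?_ ?_
    · rintro π ⟨h1, h2⟩
      constructor
      · show (Equiv.swap c b') (π a) = b
        rw [h1, Equiv.swap_apply_of_ne_of_ne (Ne.symm hc) hb]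
      · show (Equiv.swap c b') (π a') = b'
        rw [h2, Equiv.swap_apply_left]
    · rintro π ⟨h1, h2⟩
      constructor
      · show (Equiv.swap c b') (π a) = b
        rw [h1, Equiv.swap_apply_of_ne_of_ne (Ne.symm hc) hb]
      · show (Equiv.swap c b') (π a') = c
        rw [h2, Equiv.swap_apply_right]
  have hfib : (univ.filter fun π : Perm (Fin N) => π a = b).card
      = ∑ c : Fin N, (univ.filter fun π : Perm (Fin N) => π a = b ∧ π a' = c).card := by
    rw [Finset.card_eq_sum_card_fiberwise
      (f := fun π : Perm (Fin N) => π a') (t := univ) (fun π _ => mem_univ _)]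
    exact Finset.sum_congr rfl fun c _ => by rw [filter_filter]
  have hzero : (univ.filter fun π : Perm (Fin N) => π a = b ∧ π a' = b).card = 0 := by
    rw [Finset.card_eq_zero, Finset.filter_eq_empty_iff]
    rintro π - ⟨h1, h2⟩
    exact ha (π.injective (h1.trans h2.symm))
  rw [fixCard (by omega) a b, ← Finset.add_sum_erase univ _ (mem_univ b), hzero,
    zero_add, Finset.sum_congr rfl (fun c hc => hbij c (Finset.ne_of_mem_erase hc)),
    Finset.sum_const, card_erase_of_mem (mem_univ b), card_univ, Fintype.card_fin,
    smul_eq_mul] at hfib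
  have hfac : Nat.factorial (N - 1) = (N - 1) * Nat.factorial (N - 2) := by
    obtain ⟨m, rfl⟩ : ∃ m, N = m + 2 := ⟨N - 2, by omega⟩
    simp [Nat.factorial_succ]
  rw [hfac] at hfib
  exact (Nat.eq_of_mul_eq_mul_left (by omega) hfib).symm

private lemma natineq (N t : ℕ) (h1 : 1 ≤ t) (h2 : t ≤ N) (h3 : N ≤ 2 * t) :
    Nat.factorial N * (t * Nat.factorial (N - 1) + t * t * Nat.factorial (N - 2)) ≤ 4 * (t * Nat.factorial (N - 1)) ^ 2 := by
  match N, h2, h3 with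
  | 0, h2, h3 => omega
  | 1, h2, h3 =>
    have : t = 1 := by omega
    subst this
    simp [Nat.factorial]
  | (m + 2), h2, h3 =>
    have key : (m + 2) * (m + 1) * (t * (m + 1) + t * t) ≤ 4 * (t * (m + 1)) ^ 2 := by
      have a1 : (m + 2) * (t * (m + 1)) ≤ (2 * t) * (t * (m + 1)) :=
        Nat.mul_le_mul_right _ h3
      have a2 : (m + 2) * (t * t) ≤ (2 * (m + 1)) * (t * t) :=
        Nat.mul_le_mul_right _ (by omega)
      nlinarith [Nat.mul_le_mul_left (m + 1) a1, Nat.mul_le_mul_left (m + 1) a2]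
    have hF : 0 < Nat.factorial m := Nat.factorial_pos m
    have e1 : Nat.factorial (m + 2) = (m + 2) * ((m + 1) * Nat.factorial m) := by
      rw [Nat.factorial_succ, Nat.factorial_succ]
    show Nat.factorial (m + 2) * (t * Nat.factorial (m + 1) + t * t * Nat.factorial m) ≤ 4 * (t * Nat.factorial (m + 1)) ^ 2
    rw [e1, Nat.factorial_succ]
    have lhs_eq : (m + 2) * ((m + 1) * Nat.factorial m) * (t * ((m + 1) * Nat.factorial m) + t * t * Nat.factorial m)
        = ((m + 2) * (m + 1) * (t * (m + 1) + t * t)) * (Nat.factorial m * Nat.factorial m) := by ring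
    have rhs_eq : 4 * (t * ((m + 1) * Nat.factorial m)) ^ 2
        = (4 * (t * (m + 1)) ^ 2) * (Nat.factorial m * Nat.factorial m) := by ring
    rw [lhs_eq, rhs_eq]
    exact Nat.mul_le_mul_right _ key

/-- If `T ⊆ [N]` has `|T| ≥ N/2` and `φ : [N] → [N]` is arbitrary, then for a
uniformly random permutation `π` of `[N]`, the probability that some `ℓ ∈ T` has
`φ ℓ = π ℓ` is at least `1/4`. -/
theorem stmt0 (N : ℕ) (hN : 0 < N) (T : Finset (Fin N)) (hT : N ≤ 2 * T.card)
    (φ : Fin N → Fin N) :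
    (1 : ℝ) / 4 ≤
      ((Finset.univ.filter
          (fun π : Equiv.Perm (Fin N) => ∃ ℓ ∈ T, φ ℓ = π ℓ)).card : ℝ) /
        (Fintype.card (Equiv.Perm (Fin N)) : ℝ) := by
  classical
  set A := (Finset.univ.filter
    (fun π : Equiv.Perm (Fin N) => ∃ ℓ ∈ T, φ ℓ = π ℓ)) with hA
  set Z : Perm (Fin N) → ℕ := fun π => (T.filter fun ℓ => φ ℓ = π ℓ).card with hZ
  set t := T.card with ht
  have ht1 : 1 ≤ t := by omega
  have htN : t ≤ N := by
    have := T.card_le_univ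
    simpa using this
  have hZdef : ∀ π : Perm (Fin N), Z π = ∑ ℓ ∈ T, if φ ℓ = π ℓ then 1 else 0 :=
    fun π => Finset.card_filter _ _
  -- Sum1
  have hSum1 : ∑ π : Perm (Fin N), Z π = t * Nat.factorial (N - 1) := by
    rw [Finset.sum_congr rfl fun π _ => hZdef π, Finset.sum_comm]
    have hfix : ∀ ℓ : Fin N, (∑ π : Perm (Fin N), if φ ℓ = π ℓ then 1 else 0)
        = Nat.factorial (N - 1) := by
      intro ℓ
      rw [← Finset.card_filter]
      rw [show (univ.filter fun π : Perm (Fin N) => φ ℓ = π ℓ)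
          = univ.filter fun π : Perm (Fin N) => π ℓ = φ ℓ from
        Finset.filter_congr fun π _ => eq_comm]
      exact fixCard hN ℓ (φ ℓ)
    rw [Finset.sum_congr rfl fun ℓ _ => hfix ℓ, Finset.sum_const, smul_eq_mul]
  -- Sum2
  have hSum2 : ∑ π : Perm (Fin N), (Z π) ^ 2 ≤ t * Nat.factorial (N - 1) + t * (t * Nat.factorial (N - 2)) := by
    have hsq : ∀ π : Perm (Fin N), (Z π) ^ 2
        = ∑ ℓ ∈ T, ∑ ℓ' ∈ T, if φ ℓ = π ℓ ∧ φ ℓ' = π ℓ' then 1 else 0 := by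
      intro π
      rw [hZdef π, sq, Finset.sum_mul_sum]
      exact Finset.sum_congr rfl fun ℓ _ => Finset.sum_congr rfl fun ℓ' _ => by
        rw [ite_zero_mul_ite_zero, mul_one]
    rw [Finset.sum_congr rfl fun π _ => hsq π, Finset.sum_comm]
    have hinner : ∀ ℓ ∈ T, (∑ ℓ' ∈ T, ∑ π : Perm (Fin N),
        if φ ℓ = π ℓ ∧ φ ℓ' = π ℓ' then 1 else 0) ≤ Nat.factorial (N - 1) + t * Nat.factorial (N - 2) := by
      intro ℓ hℓ
      have hPcard : ∀ ℓ' : Fin N, (∑ π : Perm (Fin N),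
          if φ ℓ = π ℓ ∧ φ ℓ' = π ℓ' then 1 else 0)
          = (univ.filter fun π : Perm (Fin N) => π ℓ = φ ℓ ∧ π ℓ' = φ ℓ').card := by
        intro ℓ'
        rw [← Finset.card_filter]
        exact congrArg Finset.card <| Finset.filter_congr fun π _ => by
          constructor
          · rintro ⟨h1, h2⟩; exact ⟨h1.symm, h2.symm⟩
          · rintro ⟨h1, h2⟩; exact ⟨h1.symm, h2.symm⟩
      have hdiag : (univ.filter fun π : Perm (Fin N) => π ℓ = φ ℓ ∧ π ℓ = φ ℓ).card
          = Nat.factorial (N - 1) := by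
        rw [show (univ.filter fun π : Perm (Fin N) => π ℓ = φ ℓ ∧ π ℓ = φ ℓ)
            = univ.filter fun π : Perm (Fin N) => π ℓ = φ ℓ from
          Finset.filter_congr fun π _ => and_self_iff]
        exact fixCard hN ℓ (φ ℓ)
      have hoff : ∀ ℓ' ∈ T.erase ℓ,
          (univ.filter fun π : Perm (Fin N) => π ℓ = φ ℓ ∧ π ℓ' = φ ℓ').card
            ≤ Nat.factorial (N - 2) := by
        intro ℓ' hℓ'
        have hne : ℓ ≠ ℓ' := (Finset.ne_of_mem_erase hℓ').symm
        by_cases hφ : φ ℓ = φ ℓ'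
        · have : (univ.filter fun π : Perm (Fin N) => π ℓ = φ ℓ ∧ π ℓ' = φ ℓ').card
              = 0 := by
            rw [Finset.card_eq_zero, Finset.filter_eq_empty_iff]
            rintro π - ⟨h1, h2⟩
            exact hne (π.injective (by rw [h1, h2, hφ]))
          omega
        · exact le_of_eq (pairCard hne hφ)
      calc (∑ ℓ' ∈ T, ∑ π : Perm (Fin N),
            if φ ℓ = π ℓ ∧ φ ℓ' = π ℓ' then 1 else 0)
          = ∑ ℓ' ∈ T,
            (univ.filter fun π : Perm (Fin N) => π ℓ = φ ℓ ∧ π ℓ' = φ ℓ').card :=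
            Finset.sum_congr rfl fun ℓ' _ => hPcard ℓ'
        _ = (univ.filter fun π : Perm (Fin N) => π ℓ = φ ℓ ∧ π ℓ = φ ℓ).card
            + ∑ ℓ' ∈ T.erase ℓ,
              (univ.filter fun π : Perm (Fin N) => π ℓ = φ ℓ ∧ π ℓ' = φ ℓ').card :=
            (Finset.add_sum_erase T _ hℓ).symm
        _ ≤ Nat.factorial (N - 1) + t * Nat.factorial (N - 2) := by
            rw [hdiag]
            gcongr Nat.factorial (N - 1) + ?_
            calc ∑ ℓ' ∈ T.erase ℓ, _ ≤ ∑ ℓ' ∈ T.erase ℓ, Nat.factorial (N - 2) :=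
                  Finset.sum_le_sum hoff
              _ = (T.erase ℓ).card * Nat.factorial (N - 2) := by rw [Finset.sum_const, smul_eq_mul]
              _ ≤ t * Nat.factorial (N - 2) := by
                  apply Nat.mul_le_mul_right
                  exact le_trans (Finset.card_erase_le) le_rfl
    calc ∑ ℓ ∈ T, ∑ π : Perm (Fin N), ∑ ℓ' ∈ T,
          (if φ ℓ = π ℓ ∧ φ ℓ' = π ℓ' then 1 else 0)
        = ∑ ℓ ∈ T, ∑ ℓ' ∈ T, ∑ π : Perm (Fin N),
          (if φ ℓ = π ℓ ∧ φ ℓ' = π ℓ' then 1 else 0) :=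
          Finset.sum_congr rfl fun ℓ _ => Finset.sum_comm
      _ ≤ ∑ _ℓ ∈ T, (Nat.factorial (N - 1) + t * Nat.factorial (N - 2)) :=
          Finset.sum_le_sum hinner
      _ = t * Nat.factorial (N - 1) + t * (t * Nat.factorial (N - 2)) := by
          rw [Finset.sum_const, smul_eq_mul]; ring
  -- support
  have hsupp : ∀ π : Perm (Fin N), π ∉ A → Z π = 0 := by
    intro π hπ
    rw [hA] at hπ
    simp only [Finset.mem_filter, Finset.mem_univ, true_and, not_exists] at hπ
    rw [hZ]
    simp only [Finset.card_eq_zero, Finset.filter_eq_empty_iff]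
    intro ℓ hℓ
    exact fun h => (hπ ℓ) ⟨hℓ, h⟩
  -- Cauchy-Schwarz
  have hCS : (∑ π : Perm (Fin N), Z π) ^ 2 ≤ A.card * ∑ π : Perm (Fin N), (Z π) ^ 2 := by
    have h1 : (∑ π ∈ A, (Z π : ℤ)) ^ 2 ≤ A.card * ∑ π ∈ A, (Z π : ℤ) ^ 2 :=
      sq_sum_le_card_mul_sum_sq
    have h2 : ∑ π ∈ A, (Z π : ℤ) = ∑ π : Perm (Fin N), (Z π : ℤ) :=
      Finset.sum_subset (Finset.subset_univ A) fun π _ hπ => by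
        rw [hsupp π hπ]; simp
    have h3 : ∑ π ∈ A, (Z π : ℤ) ^ 2 = ∑ π : Perm (Fin N), (Z π : ℤ) ^ 2 :=
      Finset.sum_subset (Finset.subset_univ A) fun π _ hπ => by
        rw [hsupp π hπ]; simp
    rw [h2, h3] at h1
    exact_mod_cast h1
  -- combine in ℕ
  have hnat := natineq N t ht1 htN hT
  have hSum1pos : 0 < ∑ π : Perm (Fin N), Z π := by
    rw [hSum1]
    exact Nat.mul_pos ht1 (Nat.factorial_pos _)
  have hSum2pos : 0 < ∑ π : Perm (Fin N), (Z π) ^ 2 := by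
    rcases Nat.eq_zero_or_pos (∑ π : Perm (Fin N), (Z π) ^ 2) with h | h
    · exfalso
      have h2 : (∑ π : Perm (Fin N), Z π) ^ 2 = 0 :=
        Nat.le_zero.mp (by simpa [h] using hCS)
      have h3 : (∑ π : Perm (Fin N), Z π) = 0 := by
        exact pow_eq_zero_iff (n := 2) (by norm_num) |>.mp h2
      omega
    · exact h
  have hmain : Nat.factorial N * (∑ π : Perm (Fin N), (Z π) ^ 2)
      ≤ (4 * A.card) * (∑ π : Perm (Fin N), (Z π) ^ 2) := by
    calc Nat.factorial N * (∑ π : Perm (Fin N), (Z π) ^ 2)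
        ≤ Nat.factorial N * (t * Nat.factorial (N - 1) + t * (t * Nat.factorial (N - 2))) := Nat.mul_le_mul_left _ hSum2
      _ = Nat.factorial N * (t * Nat.factorial (N - 1) + t * t * Nat.factorial (N - 2)) := by ring
      _ ≤ 4 * (t * Nat.factorial (N - 1)) ^ 2 := hnat
      _ = 4 * (∑ π : Perm (Fin N), Z π) ^ 2 := by rw [hSum1]
      _ ≤ 4 * (A.card * ∑ π : Perm (Fin N), (Z π) ^ 2) := Nat.mul_le_mul_left _ hCS
      _ = (4 * A.card) * (∑ π : Perm (Fin N), (Z π) ^ 2) := by ring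
  have h4 : Nat.factorial N ≤ 4 * A.card :=
    Nat.le_of_mul_le_mul_right hmain hSum2pos
  -- conclude in ℝ
  have hc : (Fintype.card (Perm (Fin N)) : ℝ) = (Nat.factorial N : ℝ) := by
    norm_cast
    simp [Fintype.card_perm]
  rw [hc, div_le_div_iff₀ (by norm_num) (by positivity)]
  push_cast
  have : (Nat.factorial N : ℝ) ≤ 4 * A.card := by exact_mod_cast h4
  linarith
end

section
/- Let X₁*, ..., Xₙ* be Boolean random variables probed in an order minimizing the expected time ∑_t t·q_t* to find the first active variable, where q_t* = Pr(X_t* = 1, X₁* = 0, ..., X_{t−1}* = 0). Then q₁* ≥ q₂* ≥ ... ≥ qₙ*. -/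
/-- `q j = Pr(Y j = 1, Y i = 0 ∀ i < j)` for the probing order `Y`. -/
def qprob {Ω : Type*} [Fintype Ω] {n : ℕ} (μ : Ω → ℝ) (Y : Fin n → Ω → Bool)
    (j : Fin n) : ℝ :=
  ∑ ω ∈ Finset.univ.filter
      (fun ω => Y j ω = true ∧ ∀ i : Fin n, i < j → Y i ω = false), μ ω

/-- If the probing order `X₁, …, Xₙ` minimizes the expected time
`∑ t t·q_t` to find the first active variable (over all reorderings), then
`q₁ ≥ q₂ ≥ … ≥ qₙ`. -/
theorem stmt6 {Ω : Type*} [Fintype Ω] {n : ℕ} (μ : Ω → ℝ) (X : Fin n → Ω → Bool)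
    (hμ0 : ∀ ω, 0 ≤ μ ω) (hμ1 : ∑ ω, μ ω = 1)
    (hopt : ∀ σ : Equiv.Perm (Fin n),
      ∑ t : Fin n, ((t : ℕ) + 1 : ℝ) * qprob μ X t
        ≤ ∑ t : Fin n, ((t : ℕ) + 1 : ℝ) * qprob μ (fun s => X (σ s)) t) :
    ∀ s t : Fin n, s ≤ t → qprob μ X t ≤ qprob μ X s := by
  have adj : ∀ (k : ℕ) (hk1 : k + 1 < n),
      qprob μ X ⟨k+1, hk1⟩ ≤ qprob μ X ⟨k, Nat.lt_of_succ_lt hk1⟩ := by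
    intro k hk1
    set i : Fin n := ⟨k, Nat.lt_of_succ_lt hk1⟩ with hi
    set j : Fin n := ⟨k+1, hk1⟩ with hj
    have hij : i ≠ j := by simp [hi, hj, Fin.ext_iff]
    set σ : Equiv.Perm (Fin n) := Equiv.swap i j with hσ
    set Y : Fin n → Ω → Bool := fun s => X (σ s) with hYdef
    have hσi : σ i = j := Equiv.swap_apply_left i j
    have hσj : σ j = i := Equiv.swap_apply_right i j
    have hσo : ∀ t : Fin n, t ≠ i → t ≠ j → σ t = t :=
      fun t h1 h2 => Equiv.swap_apply_of_ne_of_ne h1 h2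
    -- A : q' t = q t for t ≠ i, j
    have hA : ∀ t : Fin n, t ≠ i → t ≠ j → qprob μ Y t = qprob μ X t := by
      intro t h1 h2
      unfold qprob
      congr 1
      apply Finset.filter_congr
      intro ω _
      have tt : Y t ω = X t ω := by simp only [hYdef]; rw [hσo t h1 h2]
      rcases lt_or_gt_of_ne (show (t:ℕ) ≠ k by
          intro h; exact h1 (Fin.ext h)) with hlt | hgt
      · -- t < i
        have hpt : ∀ i' : Fin n, i' < t → Y i' ω = X i' ω := by
          intro i' hi'
          have hi'v : (i':ℕ) < (t:ℕ) := hi'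
          have h1' : i' ≠ i := by
            intro h
            have : (i':ℕ) = k := by rw [h]
            omega
          have h2' : i' ≠ j := by
            intro h
            have : (i':ℕ) = k+1 := by rw [h]
            omega
          simp only [hYdef]; rw [hσo i' h1' h2']
        constructor
        · rintro ⟨ha, hb⟩
          exact ⟨by rw [← tt]; exact ha, fun i' hi' => by rw [← hpt i' hi']; exact hb i' hi'⟩
        · rintro ⟨ha, hb⟩
          exact ⟨by rw [tt]; exact ha, fun i' hi' => by rw [hpt i' hi']; exact hb i' hi'⟩
      · -- t > j, i.e. (t:ℕ) > k; combined with t ≠ j get (t:ℕ) > k+1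
        have htj : k + 1 < (t:ℕ) := by
          have : (t:ℕ) ≠ k + 1 := by intro h; exact h2 (Fin.ext h)
          omega
        have hsw : ∀ i' : Fin n, i' < t → σ i' < t := by
          intro i' hi'
          by_cases e1 : i' = i
          · rw [e1, hσi]; exact show (k+1:ℕ) < (t:ℕ) from htj
          by_cases e2 : i' = j
          · rw [e2, hσj]; exact show (k:ℕ) < (t:ℕ) from hgt
          · rw [hσo i' e1 e2]; exact hi'
        have hinv : ∀ i' : Fin n, σ (σ i') = i' := fun i' => Equiv.swap_apply_self i j i'
        constructor
        · rintro ⟨ha, hb⟩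
          refine ⟨by rw [← tt]; exact ha, fun i' hi' => ?_⟩
          have := hb (σ i') (hsw i' hi')
          simp only [hYdef] at this; rwa [hinv i'] at this
        · rintro ⟨ha, hb⟩
          refine ⟨by rw [tt]; exact ha, fun i' hi' => ?_⟩
          simp only [hYdef]
          exact hb (σ i') (hsw i' hi')
    -- canonical forms
    have hiri : ∀ i' : Fin n, i' < i → (σ i' = i') := by
      intro i' hi'
      have hv : (i':ℕ) < k := hi'
      refine hσo i' (fun h => ?_) (fun h => ?_)
      · rw [h] at hv; exact absurd hv (lt_irrefl _)
      · have : (i':ℕ) = k+1 := by rw [h]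
        omega
    have hq'i : qprob μ Y i = ∑ ω ∈ Finset.univ.filter
        (fun ω => X j ω = true ∧ ∀ i' : Fin n, i' < i → X i' ω = false), μ ω := by
      unfold qprob
      congr 1
      apply Finset.filter_congr
      intro ω _
      have : Y i ω = X j ω := by simp only [hYdef]; rw [hσi]
      rw [this]
      constructor
      · rintro ⟨ha, hb⟩
        exact ⟨ha, fun i' hi' => by
          have := hb i' hi'; simp only [hYdef] at this; rwa [hiri i' hi'] at this⟩
      · rintro ⟨ha, hb⟩
        exact ⟨ha, fun i' hi' => by
          simp only [hYdef]; rw [hiri i' hi']; exact hb i' hi'⟩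
    have hltj : ∀ i' : Fin n, i' < j ↔ (i' = i ∨ i' < i) := by
      intro i'
      constructor
      · intro h
        have h' : (i':ℕ) < k+1 := h
        rcases Nat.lt_succ_iff_lt_or_eq.mp h' with h'' | h''
        · exact Or.inr h''
        · exact Or.inl (Fin.ext h'')
      · rintro (h | h)
        · rw [h]; exact show (k:ℕ) < k+1 by omega
        · exact lt_trans h (show i < j from by simp [hi, hj, Fin.lt_def])
    have hq'j : qprob μ Y j = ∑ ω ∈ Finset.univ.filter
        (fun ω => X i ω = true ∧ X j ω = false ∧ ∀ i' : Fin n, i' < i → X i' ω = false), μ ω := by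
      unfold qprob
      congr 1
      apply Finset.filter_congr
      intro ω _
      have hYj : Y j ω = X i ω := by simp only [hYdef]; rw [hσj]
      rw [hYj]
      constructor
      · rintro ⟨ha, hb⟩
        refine ⟨ha, ?_, fun i' hi' => ?_⟩
        · have := hb i ((hltj i).mpr (Or.inl rfl))
          simp only [hYdef] at this; rwa [hσi] at this
        · have := hb i' ((hltj i').mpr (Or.inr hi'))
          simp only [hYdef] at this; rwa [hiri i' hi'] at this
      · rintro ⟨ha, hb, hc⟩
        refine ⟨ha, fun i' hi' => ?_⟩
        rcases (hltj i').mp hi' with h | h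
        · rw [h]; simp only [hYdef]; rw [hσi]; exact hb
        · simp only [hYdef]; rw [hiri i' h]; exact hc i' h
    have hqj : qprob μ X j = ∑ ω ∈ Finset.univ.filter
        (fun ω => X j ω = true ∧ X i ω = false ∧ ∀ i' : Fin n, i' < i → X i' ω = false), μ ω := by
      unfold qprob
      congr 1
      apply Finset.filter_congr
      intro ω _
      constructor
      · rintro ⟨ha, hb⟩
        exact ⟨ha, hb i ((hltj i).mpr (Or.inl rfl)), fun i' hi' => hb i' ((hltj i').mpr (Or.inr hi'))⟩
      · rintro ⟨ha, hb, hc⟩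
        refine ⟨ha, fun i' hi' => ?_⟩
        rcases (hltj i').mp hi' with h | h
        · rw [h]; exact hb
        · exact hc i' h
    have hqi : qprob μ X i = ∑ ω ∈ Finset.univ.filter
        (fun ω => X i ω = true ∧ ∀ i' : Fin n, i' < i → X i' ω = false), μ ω := rfl
    -- B : conservation
    have hB : qprob μ Y i + qprob μ Y j = qprob μ X i + qprob μ X j := by
      rw [hq'i, hq'j, hqi, hqj]
      rw [Finset.sum_filter, Finset.sum_filter, Finset.sum_filter, Finset.sum_filter,
        ← Finset.sum_add_distrib, ← Finset.sum_add_distrib]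
      apply Finset.sum_congr rfl
      intro ω _
      by_cases hP : ∀ i' : Fin n, i' < i → X i' ω = false
      · cases hXi : X i ω <;> cases hXj : X j ω <;> simp [hP, hXi, hXj]
      · simp [hP]
    -- C : q'_j ≤ q_i
    have hC : qprob μ Y j ≤ qprob μ X i := by
      rw [hq'j, hqi]
      apply Finset.sum_le_sum_of_subset_of_nonneg
      · intro ω hω
        simp only [Finset.mem_filter] at hω ⊢
        tauto
      · intro ω _ _; exact hμ0 ω
    -- D : optimality
    have hD : qprob μ X j ≤ qprob μ Y j := by
      have h := hopt σ
      have hYq : ∀ t : Fin n, qprob μ (fun s => X (σ s)) t = qprob μ Y t := fun t => rfl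
      simp only [hYq] at h
      have hsum : ∑ t : Fin n, (((t:ℕ) + 1 : ℝ) * qprob μ Y t - ((t:ℕ) + 1 : ℝ) * qprob μ X t)
          = ∑ t ∈ ({i, j} : Finset (Fin n)),
              (((t:ℕ) + 1 : ℝ) * qprob μ Y t - ((t:ℕ) + 1 : ℝ) * qprob μ X t) := by
        symm
        apply Finset.sum_subset (Finset.subset_univ _)
        intro t _ ht
        simp only [Finset.mem_insert, Finset.mem_singleton, not_or] at ht
        rw [hA t ht.1 ht.2]
        ring
      rw [Finset.sum_pair hij] at hsum
      have h0 : (0:ℝ) ≤ ∑ t : Fin n, (((t:ℕ) + 1 : ℝ) * qprob μ Y t - ((t:ℕ) + 1 : ℝ) * qprob μ X t) := by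
        rw [Finset.sum_sub_distrib]
        linarith
      rw [hsum] at h0
      have hiv : ((i:ℕ) : ℝ) = (k : ℝ) := by simp [hi]
      have hjv : ((j:ℕ) : ℝ) = (k : ℝ) + 1 := by simp [hj]
      rw [hiv, hjv] at h0
      nlinarith [hB]
    calc qprob μ X ⟨k+1, hk1⟩ = qprob μ X j := rfl
      _ ≤ qprob μ Y j := hD
      _ ≤ qprob μ X i := hC
      _ = qprob μ X ⟨k, Nat.lt_of_succ_lt hk1⟩ := rfl
  -- chain adjacent steps
  have main : ∀ (m : ℕ) (s t : Fin n), (t:ℕ) = (s:ℕ) + m → qprob μ X t ≤ qprob μ X s := by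
    intro m
    induction m with
    | zero => intro s t h; have : t = s := Fin.ext (by omega); rw [this]
    | succ m ih =>
      intro s t h
      have hlt : (s:ℕ) + m + 1 < n := by
        have := t.isLt; omega
      have ht : t = ⟨(s:ℕ) + m + 1, hlt⟩ := Fin.ext (show (t:ℕ) = (s:ℕ) + m + 1 by omega)
      have h1 : qprob μ X t ≤ qprob μ X ⟨(s:ℕ) + m, Nat.lt_of_succ_lt hlt⟩ := by
        rw [ht]; exact adj ((s:ℕ) + m) hlt
      have h2 : qprob μ X ⟨(s:ℕ) + m, Nat.lt_of_succ_lt hlt⟩ ≤ qprob μ X s :=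
        ih s ⟨(s:ℕ) + m, Nat.lt_of_succ_lt hlt⟩ rfl
      exact le_trans h1 h2
  intro s t hst
  exact main ((t:ℕ) - (s:ℕ)) s t (by omega)
end

section
/- Let q₁* ≥ q₂* ≥ ... ≥ qₙ* > 0 and c₁*, ..., cₙ* ∈ (0,1] satisfy r_s* = q_s*/c_s* and r_s* − r_{s+1}* = q_s* for all s (with r_{n+1}* = 0). Then for all s ≤ t, 1/c_s* ≤ 1/c_t* + (t − s). -/
/-- If `q₁ ≥ … ≥ qₙ > 0`, `c_s ∈ (0,1]`, `r_s = q_s / c_s`,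
`r_s - r_{s+1} = q_s` and `r_{n+1} = 0`, then for all `s ≤ t`,
`1/c_s ≤ 1/c_t + (t - s)`. -/
theorem stmt7 (n : ℕ) (q c : Fin n → ℝ) (r : ℕ → ℝ)
    (hqmono : ∀ s t : Fin n, s ≤ t → q t ≤ q s) (hqpos : ∀ t, 0 < q t)
    (hc : ∀ t, 0 < c t ∧ c t ≤ 1)
    (hr : ∀ s : Fin n, r s = q s / c s)
    (hrn : r n = 0)
    (hstep : ∀ s : Fin n, r s - r ((s : ℕ) + 1) = q s) :
    ∀ s t : Fin n, s ≤ t → 1 / c s ≤ 1 / c t + (((t : ℕ) - (s : ℕ) : ℕ) : ℝ) := by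
  have key : ∀ s : Fin n, ∀ h : (s : ℕ) + 1 < n, 1 / c s ≤ 1 / c ⟨(s : ℕ) + 1, h⟩ + 1 := by
    intro s h
    set s' : Fin n := ⟨(s : ℕ) + 1, h⟩ with hs'
    have hq := hstep s
    have hrs' : r ((s : ℕ) + 1) = q s' / c s' := hr s'
    rw [hr s, hrs'] at hq
    have hcs := hc s
    have hcs' := hc s'
    have hqs := hqpos s
    have hqs' := hqpos s'
    have hmono : q s' ≤ q s := hqmono s s' (Fin.le_def.mpr (by rw [hs']; exact Nat.le_succ _))
    have hne : q s ≠ 0 := ne_of_gt hqs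
    have h1 : q s' / c s' ≤ q s / c s' := by gcongr; exact hcs'.1.le
    have h2 : q s / c s ≤ q s + q s / c s' := by linarith
    calc 1 / c s = (q s / c s) / q s := by
          rw [div_right_comm, div_self hne]
      _ ≤ (q s + q s / c s') / q s := by gcongr
      _ = 1 / c s' + 1 := by field_simp; ring
  suffices H : ∀ d : ℕ, ∀ s t : Fin n, (t : ℕ) = (s : ℕ) + d →
      1 / c s ≤ 1 / c t + (d : ℝ) by
    intro s t hst
    obtain ⟨d, hd⟩ := Nat.exists_eq_add_of_le (Fin.le_def.mp hst)
    have h1 := H d s t hd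
    have h2 : ((t : ℕ) - (s : ℕ) : ℕ) = d := by omega
    rw [h2]
    exact h1
  intro d
  induction d with
  | zero =>
    intro s t hd
    have : s = t := Fin.ext (by omega)
    subst this
    simp
  | succ d ih =>
    intro s t hd
    have hlt : (s : ℕ) + d < n := by omega
    set t' : Fin n := ⟨(s : ℕ) + d, hlt⟩ with ht'
    have h1 : (t' : ℕ) + 1 < n := by simpa using (by omega : (s:ℕ) + d + 1 < n)
    have hteq : (⟨(t' : ℕ) + 1, h1⟩ : Fin n) = t := Fin.ext (by simp [ht']; omega)
    have h2 := key t' h1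
    rw [hteq] at h2
    have h3 := ih s t' (by rw [ht'])
    push_cast
    push_cast at h3
    linarith
end

section
/- Let q₁* ≥ ... ≥ qₙ* > 0 and c₁*, ..., cₙ* ∈ (0,1] with r_s* = q_s*/c_s* and r_s* − r_{s+1}* = q_s* (r_{n+1}* = 0). Define d_t* = min_{s ≤ t} c_s*. Then d₁* ≥ d₂* ≥ ... ≥ dₙ* > 0, d_t* ≤ c_t* for all t, and ∑_t q_t*/d_t* ≤ 2 ∑_t q_t*/c_t*. -/
/-- With `q₁ ≥ … ≥ qₙ > 0`, `c_s ∈ (0,1]`, `r_s = q_s / c_s`,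
`r_s - r_{s+1} = q_s`, `r_{n+1} = 0`, the proxies `d_t = min_{s ≤ t} c_s` satisfy
`d₁ ≥ … ≥ dₙ > 0`, `d_t ≤ c_t`, and `∑ q_t/d_t ≤ 2 ∑ q_t/c_t`. -/
theorem stmt8 (n : ℕ) (q c : Fin n → ℝ) (r : ℕ → ℝ)
    (hqmono : ∀ s t : Fin n, s ≤ t → q t ≤ q s) (hqpos : ∀ t, 0 < q t)
    (hc : ∀ t, 0 < c t ∧ c t ≤ 1)
    (hr : ∀ s : Fin n, r s = q s / c s)
    (hrn : r n = 0)
    (hstep : ∀ s : Fin n, r s - r ((s : ℕ) + 1) = q s)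
    (d : Fin n → ℝ)
    (hd : ∀ t, d t = (Finset.Iic t).inf' ⟨t, Finset.mem_Iic.mpr le_rfl⟩ c) :
    (∀ s t : Fin n, s ≤ t → d t ≤ d s) ∧ (∀ t, 0 < d t) ∧ (∀ t, d t ≤ c t)
    ∧ (∑ t : Fin n, q t / d t ≤ 2 * ∑ t : Fin n, q t / c t) := by
  set Q : ℕ → ℝ := fun u => if h : u < n then q ⟨u, h⟩ else 0 with hQ
  have hQnn : ∀ u, 0 ≤ Q u := by
    intro u; simp only [hQ]; split
    · exact (hqpos _).le
    · exact le_refl 0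
  -- telescoping
  have tele : ∀ k a, a + k ≤ n → r a = r (a + k) + ∑ u ∈ Finset.Ico a (a + k), Q u := by
    intro k
    induction k with
    | zero => intro a _; simp
    | succ k ih =>
      intro a hak
      have h1 : a + k < n := by omega
      have hQak : Q (a + k) = q ⟨a + k, h1⟩ := by simp [hQ, h1]
      rw [show a + (k+1) = (a+k)+1 by ring,
        Finset.sum_Ico_succ_top (by omega : a ≤ a + k)]
      have := ih a (by omega)
      linarith [this, hQak ▸ (hstep ⟨a + k, h1⟩)]
  have tele' : ∀ a b : ℕ, a ≤ b → b ≤ n → r a = r b + ∑ u ∈ Finset.Ico a b, Q u := by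
    intro a b hab hbn
    have := tele (b - a) a (by omega)
    rwa [show a + (b - a) = b by omega] at this
  -- d facts
  have hdle : ∀ (t : Fin n) (u : Fin n), u ≤ t → d t ≤ c u := by
    intro t u hu
    rw [hd]
    exact Finset.inf'_le _ (Finset.mem_Iic.mpr hu)
  have hdex : ∀ t : Fin n, ∃ s : Fin n, s ≤ t ∧ d t = c s := by
    intro t
    obtain ⟨s, hs, hds⟩ := Finset.exists_mem_eq_inf' (⟨t, Finset.mem_Iic.mpr le_rfl⟩ :
      (Finset.Iic t).Nonempty) c
    exact ⟨s, Finset.mem_Iic.mp hs, (hd t).trans hds⟩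
  have part1 : ∀ s t : Fin n, s ≤ t → d t ≤ d s := by
    intro s t hst
    obtain ⟨u, hu, hdu⟩ := hdex s
    rw [hdu]
    exact hdle t u (hu.trans hst)
  have part2 : ∀ t, 0 < d t := by
    intro t
    obtain ⟨u, _, hdu⟩ := hdex t
    rw [hdu]; exact (hc u).1
  have part3 : ∀ t, d t ≤ c t := fun t => hdle t t le_rfl
  refine ⟨part1, part2, part3, ?_⟩
  -- per-t bound : q t / d t ≤ q t / c t + t * q t
  have main : ∀ t : Fin n, q t / d t ≤ q t / c t + (t : ℕ) * q t := by
    intro t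
    obtain ⟨s, hst, hds⟩ := hdex t
    have hcs := (hc s).1
    have hct := (hc t).1
    have hqs := hqpos s
    have hqt := hqpos t
    have hqle : q t ≤ q s := hqmono s t hst
    -- r s ≤ r t + (t - s) * q s
    have hts : (s : ℕ) ≤ (t : ℕ) := hst
    have e1 : r s = r t + ∑ u ∈ Finset.Ico (s : ℕ) (t : ℕ), Q u :=
      tele' s t hts (le_of_lt t.isLt)
    have e2 : ∑ u ∈ Finset.Ico (s : ℕ) (t : ℕ), Q u ≤ (((t : ℕ) - (s : ℕ) : ℕ) : ℝ) * q s := by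
      calc ∑ u ∈ Finset.Ico (s : ℕ) (t : ℕ), Q u
          ≤ ∑ _u ∈ Finset.Ico (s : ℕ) (t : ℕ), q s := by
            apply Finset.sum_le_sum
            intro u hu
            rw [Finset.mem_Ico] at hu
            have hun : u < n := lt_trans hu.2 t.isLt
            have : Q u = q ⟨u, hun⟩ := by simp [hQ, hun]
            rw [this]
            exact hqmono s ⟨u, hun⟩ hu.1
        _ = (((t : ℕ) - (s : ℕ) : ℕ) : ℝ) * q s := by
            rw [Finset.sum_const, Nat.card_Ico, nsmul_eq_mul]
    have key : q s / c s ≤ q t / c t + (((t : ℕ) - (s : ℕ) : ℕ) : ℝ) * q s := by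
      rw [← hr s, ← hr t]; linarith
    set k : ℝ := (((t : ℕ) - (s : ℕ) : ℕ) : ℝ) with hk
    have hknn : (0:ℝ) ≤ k := Nat.cast_nonneg _
    -- q s * c t ≤ q t * c s + k * q s * c s * c t
    have key2 : q s * c t ≤ q t * c s + k * (q s * (c s * c t)) := by
      have h1 : q s / c s * (c s * c t) ≤ (q t / c t + k * q s) * (c s * c t) :=
        mul_le_mul_of_nonneg_right key (by positivity)
      have h2 : q s / c s * (c s * c t) = q s * c t := by field_simp
      have h3 : (q t / c t + k * q s) * (c s * c t) = q t * c s + k * (q s * (c s * c t)) := by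
        field_simp
      linarith [h2 ▸ h3 ▸ h1]
    -- divide by q s : c t ≤ c s + k * c s * c t
    have key3 : c t ≤ c s + k * (c s * c t) := by
      have h4 : q t * c s ≤ q s * c s := mul_le_mul_of_nonneg_right hqle hcs.le
      nlinarith [key2]
    -- goal after clearing : q t * c t ≤ q t * c s + k * q t * c s * c t
    have key4 : q t / c s ≤ q t / c t + k * q t := by
      rw [div_le_iff₀ hcs]
      have hA : q t / c t * c t = q t := div_mul_cancel₀ _ hct.ne'
      have hB : (0:ℝ) ≤ q t / c t := by positivity
      have hA2 : q t / c t * c t * c s = q t * c s := by rw [hA]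
      have hA3 : k * (q t / c t * c t * c s) = k * (q t * c s) := by rw [hA2]
      nlinarith [mul_le_mul_of_nonneg_left key3 hB, hA, hA2, hA3]
    have hkt : k ≤ (t : ℕ) := by
      rw [hk]
      exact_mod_cast Nat.cast_le.mpr (Nat.sub_le _ _)
    rw [hds]
    calc q t / c s ≤ q t / c t + k * q t := key4
      _ ≤ q t / c t + (t : ℕ) * q t := by nlinarith [hqt.le]
  -- sum of t * q t ≤ sum of r t
  have hrval : ∀ t : Fin n, r t = ∑ u ∈ Finset.Ico (t : ℕ) n, Q u := by
    intro t
    have := tele' t n (le_of_lt t.isLt) le_rfl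
    rw [hrn] at this; linarith
  have sumswap : ∑ t : Fin n, (t : ℕ) * q t ≤ ∑ t : Fin n, q t / c t := by
    have hrw : ∑ t : Fin n, q t / c t = ∑ t ∈ Finset.range n, ∑ u ∈ Finset.Ico t n, Q u := by
      rw [Finset.sum_range fun i => _]
      · apply Finset.sum_congr rfl
        intro t _
        rw [← hrval t, hr t]
    rw [hrw, show Finset.range n = Finset.Ico 0 n by simp,
      Finset.sum_Ico_Ico_comm 0 n fun _ u => Q u]
    have hlhs : ∑ t : Fin n, (t : ℕ) * q t = ∑ u ∈ Finset.Ico 0 n, (u : ℝ) * Q u := by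
      rw [show Finset.Ico 0 n = Finset.range n by simp, Finset.sum_range fun i => _]
      apply Finset.sum_congr rfl
      intro t _
      simp [hQ, t.isLt]
    rw [hlhs]
    apply Finset.sum_le_sum
    intro u hu
    rw [Finset.mem_Ico] at hu
    calc (u : ℝ) * Q u ≤ ((u : ℕ) + 1) * Q u := by nlinarith [hQnn u]
      _ ≤ ∑ _i ∈ Finset.Ico 0 (u + 1), Q u := by
          rw [Finset.sum_const, Nat.card_Ico, nsmul_eq_mul]; push_cast; simp
  calc ∑ t : Fin n, q t / d t ≤ ∑ t : Fin n, (q t / c t + (t : ℕ) * q t) :=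
        Finset.sum_le_sum fun t _ => main t
    _ = ∑ t : Fin n, q t / c t + ∑ t : Fin n, (t : ℕ) * q t := Finset.sum_add_distrib
    _ ≤ 2 * ∑ t : Fin n, q t / c t := by linarith [sumswap]
end

section
/- Let Y₁, ..., Yₙ be Boolean random variables satisfying the conditional negative cylinder property: for any disjoint sets A, B of indices and any event E determined by fixing values of variables outside A ∪ B, Pr(all Y_a = 1 for a ∈ A and all Y_b = 0 for b ∈ B | E) ≥ Pr(all Y_a = 1 for a ∈ A | E) · Pr(all Y_b = 0 for b ∈ B | E). Let A, B, C be disjoint index sets and i ∉ A ∪ B ∪ C. Then Pr(Y_i = 1 | Y_j = 0 ∀ j ∈ B ∪ C) ≥ Pr(Y_i = 1, Y_j = 0 ∀ j ∈ C | Y_j = 0 ∀ j ∈ B) · Pr(Y_j = 0 ∀ j ∈ B) / Pr(Y_j = 0 ∀ j ∈ B ∪ C) ≥ Pr(Y_i = 1 | Y_j = 0 ∀ j ∈ B). -/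
/-- Probability of an event under a probability mass function `μ` on `Fin n → Bool`. -/
def pr {n : ℕ} (μ : (Fin n → Bool) → ℝ) (s : Finset (Fin n → Bool)) : ℝ :=
  ∑ ω ∈ s, μ ω

/-- If `Y₁, …, Yₙ` satisfy the conditional negative cylinder property, then
for disjoint `A, B, C` and `i ∉ A ∪ B ∪ C`,
`Pr(Yᵢ = 1 | 0 on B ∪ C) ≥ Pr(Yᵢ = 1, 0 on C | 0 on B)·Pr(0 on B)/Pr(0 on B ∪ C)
 ≥ Pr(Yᵢ = 1 | 0 on B)`. -/
theorem stmt9 {n : ℕ} (μ : (Fin n → Bool) → ℝ)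
    (hμ0 : ∀ ω, 0 ≤ μ ω) (hμ1 : ∑ ω, μ ω = 1)
    -- Conditional negative cylinder property:
    (hCNCP : ∀ (A B S : Finset (Fin n)) (v : Fin n → Bool),
      Disjoint A B → Disjoint S (A ∪ B) →
      0 < pr μ (Finset.univ.filter (fun ω => ∀ j ∈ S, ω j = v j)) →
      pr μ (Finset.univ.filter
          (fun ω => (∀ j ∈ A, ω j = true) ∧ (∀ j ∈ B, ω j = false)
              ∧ ∀ j ∈ S, ω j = v j))
        / pr μ (Finset.univ.filter (fun ω => ∀ j ∈ S, ω j = v j))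
      ≥ (pr μ (Finset.univ.filter
            (fun ω => (∀ j ∈ A, ω j = true) ∧ ∀ j ∈ S, ω j = v j))
          / pr μ (Finset.univ.filter (fun ω => ∀ j ∈ S, ω j = v j)))
        * (pr μ (Finset.univ.filter
            (fun ω => (∀ j ∈ B, ω j = false) ∧ ∀ j ∈ S, ω j = v j))
          / pr μ (Finset.univ.filter (fun ω => ∀ j ∈ S, ω j = v j))))
    (A B C : Finset (Fin n)) (i : Fin n)
    (hAB : Disjoint A B) (hAC : Disjoint A C) (hBC : Disjoint B C)
    (hi : i ∉ A ∪ B ∪ C)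
    (hposBC : 0 < pr μ (Finset.univ.filter (fun ω => ∀ j ∈ B ∪ C, ω j = false)))
    (hposB : 0 < pr μ (Finset.univ.filter (fun ω => ∀ j ∈ B, ω j = false))) :
    (pr μ (Finset.univ.filter
          (fun ω => ω i = true ∧ ∀ j ∈ B ∪ C, ω j = false))
        / pr μ (Finset.univ.filter (fun ω => ∀ j ∈ B ∪ C, ω j = false))
      ≥ (pr μ (Finset.univ.filter
            (fun ω => (ω i = true ∧ ∀ j ∈ C, ω j = false) ∧ ∀ j ∈ B, ω j = false))
          / pr μ (Finset.univ.filter (fun ω => ∀ j ∈ B, ω j = false)))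
        * pr μ (Finset.univ.filter (fun ω => ∀ j ∈ B, ω j = false))
        / pr μ (Finset.univ.filter (fun ω => ∀ j ∈ B ∪ C, ω j = false)))
    ∧ ((pr μ (Finset.univ.filter
            (fun ω => (ω i = true ∧ ∀ j ∈ C, ω j = false) ∧ ∀ j ∈ B, ω j = false))
          / pr μ (Finset.univ.filter (fun ω => ∀ j ∈ B, ω j = false)))
        * pr μ (Finset.univ.filter (fun ω => ∀ j ∈ B, ω j = false))
        / pr μ (Finset.univ.filter (fun ω => ∀ j ∈ B ∪ C, ω j = false))
      ≥ pr μ (Finset.univ.filter (fun ω => ω i = true ∧ ∀ j ∈ B, ω j = false))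
          / pr μ (Finset.univ.filter (fun ω => ∀ j ∈ B, ω j = false))) := by
  have hiB : i ∉ B := fun h => hi (by simp [Finset.mem_union, h])
  have hiC : i ∉ C := fun h => hi (by simp [Finset.mem_union, h])
  -- event equalities
  have e1 : (Finset.univ.filter
        (fun ω : Fin n → Bool => (ω i = true ∧ ∀ j ∈ C, ω j = false) ∧ ∀ j ∈ B, ω j = false))
      = Finset.univ.filter (fun ω => ω i = true ∧ ∀ j ∈ B ∪ C, ω j = false) := by
    apply Finset.filter_congr; intro ω _
    simp only [Finset.mem_union, eq_iff_iff]
    constructor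
    · rintro ⟨⟨h1, h2⟩, h3⟩
      exact ⟨h1, fun j hj => hj.elim (h3 j) (h2 j)⟩
    · rintro ⟨h1, h2⟩
      exact ⟨⟨h1, fun j hj => h2 j (Or.inr hj)⟩, fun j hj => h2 j (Or.inl hj)⟩
  have hd1 : Disjoint ({i} : Finset (Fin n)) C := by
    simp [Finset.disjoint_singleton_left, hiC]
  have hd2 : Disjoint B ({i} ∪ C) := by
    rw [Finset.disjoint_union_right]
    exact ⟨by simp [Finset.disjoint_singleton_right, hiB], hBC⟩
  have key := hCNCP {i} C B (fun _ => false) hd1 hd2 hposB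
  simp only [Finset.mem_singleton, forall_eq] at key
  have e2 : (Finset.univ.filter
        (fun ω : Fin n → Bool => ω i = true ∧ (∀ j ∈ C, ω j = false) ∧ ∀ j ∈ B, ω j = false))
      = Finset.univ.filter (fun ω => ω i = true ∧ ∀ j ∈ B ∪ C, ω j = false) := by
    apply Finset.filter_congr; intro ω _
    simp only [Finset.mem_union, eq_iff_iff]
    constructor
    · rintro ⟨h1, h2, h3⟩
      exact ⟨h1, fun j hj => hj.elim (h3 j) (h2 j)⟩
    · rintro ⟨h1, h2⟩
      exact ⟨h1, fun j hj => h2 j (Or.inr hj), fun j hj => h2 j (Or.inl hj)⟩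
  have e3 : (Finset.univ.filter
        (fun ω : Fin n → Bool => (∀ j ∈ C, ω j = false) ∧ ∀ j ∈ B, ω j = false))
      = Finset.univ.filter (fun ω => ∀ j ∈ B ∪ C, ω j = false) := by
    apply Finset.filter_congr; intro ω _
    simp only [Finset.mem_union, eq_iff_iff]
    constructor
    · rintro ⟨h2, h3⟩
      exact fun j hj => hj.elim (h3 j) (h2 j)
    · intro h2
      exact ⟨fun j hj => h2 j (Or.inr hj), fun j hj => h2 j (Or.inl hj)⟩
  rw [e2, e3] at key
  rw [e1]
  set P := pr μ (Finset.univ.filter (fun ω => ∀ j ∈ B, ω j = false)) with hP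
  set Q := pr μ (Finset.univ.filter (fun ω => ∀ j ∈ B ∪ C, ω j = false)) with hQ
  set X := pr μ (Finset.univ.filter (fun ω => ω i = true ∧ ∀ j ∈ B ∪ C, ω j = false)) with hX
  set Z := pr μ (Finset.univ.filter (fun ω => ω i = true ∧ ∀ j ∈ B, ω j = false)) with hZ
  rw [div_mul_cancel₀ _ (ne_of_gt hposB)]
  refine ⟨le_refl _, ?_⟩
  -- key : X / P ≥ Z / P * (Q / P), goal : X / Q ≥ Z / P
  rw [ge_iff_le, div_le_div_iff₀ hposB hposBC]
  rw [ge_iff_le, div_mul_div_comm, div_le_div_iff₀ (by positivity) hposB] at key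
  nlinarith [hposB, hposBC]
end

section
/- Let M = (S, I) be a matroid with rank function r, and let y ∈ ℝ^S lie in the up-hull of the base polymatroid of M (i.e., there exists z with z ≤ y componentwise, z(T) ≤ r(T) for all T ⊆ S, and z(S) = r(S)). For β ≥ 1, let A_β ⊆ S include each element e independently with probability min(1, β·y_e). Then E[r(A_β)] ≥ (1 − e^{−β})·r(S). -/
open Finset

namespace Stmt10Aux

variable {α : Type*} [Fintype α] [DecidableEq α]

noncomputable def wt (x : α → ℝ) (A : Finset α) : ℝ :=
  (∏ e ∈ A, x e) * ∏ e ∈ Aᶜ, (1 - x e)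

lemma sum_insert_bij (e : α) (h : Finset α → ℝ) :
    ∑ A ∈ univ.filter (fun A : Finset α => e ∈ A), h A
      = ∑ B ∈ univ.filter (fun B : Finset α => e ∉ B), h (insert e B) := by
  refine Finset.sum_nbij' (fun A => A.erase e) (fun B => insert e B) ?_ ?_ ?_ ?_ ?_
  · intro A hA; simp
  · intro B hB; simp
  · intro A hA; simp at hA; exact Finset.insert_erase hA
  · intro B hB; simp at hB; exact Finset.erase_insert hB
  · intro A hA; simp at hA; rw [Finset.insert_erase hA]

lemma sum_pair (e : α) (h : Finset α → ℝ) :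
    ∑ A : Finset α, h A
      = ∑ A ∈ univ.filter (fun A : Finset α => e ∉ A), (h A + h (insert e A)) := by
  rw [Finset.sum_add_distrib, ← sum_insert_bij e h]
  rw [← Finset.sum_filter_add_sum_filter_not univ (fun A : Finset α => e ∉ A) h]
  have : (univ.filter (fun A : Finset α => ¬ e ∉ A)) = univ.filter (fun A : Finset α => e ∈ A) := by
    apply Finset.filter_congr; intro A _; simp
  rw [this]

lemma wt_nonneg {x : α → ℝ} (h0 : ∀ e, 0 ≤ x e) (h1 : ∀ e, x e ≤ 1) (A : Finset α) :
    0 ≤ wt x A := by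
  apply mul_nonneg
  · exact Finset.prod_nonneg fun e _ => h0 e
  · exact Finset.prod_nonneg fun e _ => by linarith [h1 e]

lemma wt_not_mem {x : α → ℝ} {A : Finset α} {e : α} (he : e ∉ A) :
    wt x A = (1 - x e) * ((∏ f ∈ A, x f) * ∏ f ∈ Aᶜ.erase e, (1 - x f)) := by
  have heA : e ∈ Aᶜ := by simpa using he
  rw [wt, ← Finset.mul_prod_erase Aᶜ _ heA]
  ring

lemma wt_insert {x : α → ℝ} {A : Finset α} {e : α} (he : e ∉ A) :
    wt x (insert e A) = x e * ((∏ f ∈ A, x f) * ∏ f ∈ Aᶜ.erase e, (1 - x f)) := by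
  rw [wt, Finset.prod_insert he, Finset.compl_insert]
  ring

lemma sum_wt (x : α → ℝ) : ∑ A : Finset α, wt x A = 1 := by
  calc ∑ A : Finset α, wt x A
      = ∑ A ∈ (univ : Finset α).powerset, (∏ e ∈ A, x e) * ∏ e ∈ univ \ A, (1 - x e) := by
        rw [Finset.powerset_univ]
        exact Finset.sum_congr rfl fun A _ => by rw [wt, Finset.compl_eq_univ_sdiff]
    _ = ∏ e : α, (x e + (1 - x e)) := (Finset.prod_add x (fun e => 1 - x e) univ).symm
    _ = 1 := by simp

variable {α : Type*} [Fintype α] [DecidableEq α]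

lemma r_union_mono (r : Finset α → ℕ)
    (hrmono : ∀ (T : Finset α) (e : α), r T ≤ r (insert e T))
    (A C : Finset α) : r A ≤ r (A ∪ C) := by
  induction C using Finset.induction_on with
  | empty => simpa using le_refl (r A)
  | @insert f C hf ih =>
      rw [Finset.union_insert]
      exact le_trans ih (hrmono _ _)

lemma r_mono (r : Finset α → ℕ)
    (hrmono : ∀ (T : Finset α) (e : α), r T ≤ r (insert e T))
    {A B : Finset α} (hAB : A ⊆ B) : r A ≤ r B := by
  have := r_union_mono r hrmono A (B \ A)
  rwa [Finset.union_sdiff_of_subset hAB] at this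

lemma r_span (r : Finset α → ℕ)
    (hrmono : ∀ (T : Finset α) (e : α), r T ≤ r (insert e T))
    (hrsub : ∀ T₁ T₂ : Finset α, r (T₁ ∪ T₂) + r (T₁ ∩ T₂) ≤ r T₁ + r T₂)
    (A B : Finset α) (hB : ∀ e ∈ B, r (insert e A) = r A) :
    r (A ∪ B) = r A := by
  induction B using Finset.induction_on with
  | empty => simp
  | @insert f B hf ih =>
      have hB' : ∀ e ∈ B, r (insert e A) = r A := fun e he => hB e (Finset.mem_insert_of_mem he)
      have hAB : r (A ∪ B) = r A := ih hB'
      have hfA : r (insert f A) = r A := hB f (Finset.mem_insert_self f B)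
      have hsub := hrsub (insert f A) (A ∪ B)
      have hU : (insert f A) ∪ (A ∪ B) = insert f (A ∪ B) := by
        rw [Finset.insert_union, ← Finset.union_assoc, Finset.union_self]
      have hI : A ⊆ (insert f A) ∩ (A ∪ B) := by
        intro a ha
        exact Finset.mem_inter.2 ⟨Finset.mem_insert_of_mem ha, Finset.mem_union_left _ ha⟩
      have h1 : r A ≤ r ((insert f A) ∩ (A ∪ B)) := r_mono r hrmono hI
      have h2 : r (A ∪ B) ≤ r (insert f (A ∪ B)) := hrmono _ _
      rw [hU] at hsub
      rw [Finset.union_insert]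
      omega

/-- Key polymatroid inequality. -/
lemma key_ineq (r : Finset α → ℕ)
    (hrmono : ∀ (T : Finset α) (e : α), r T ≤ r (insert e T))
    (hrunit : ∀ (T : Finset α) (e : α), r (insert e T) ≤ r T + 1)
    (hrsub : ∀ T₁ T₂ : Finset α, r (T₁ ∪ T₂) + r (T₁ ∩ T₂) ≤ r T₁ + r T₂)
    (z : α → ℝ) (hz0 : ∀ e, 0 ≤ z e)
    (hzT : ∀ T : Finset α, ∑ e ∈ T, z e ≤ (r T : ℝ))
    (hzS : ∑ e, z e = (r Finset.univ : ℝ)) (A : Finset α) :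
    (r Finset.univ : ℝ) - (r A : ℝ) ≤ ∑ e, z e * ((r (insert e A) : ℝ) - (r A : ℝ)) := by
  set C : Finset α := univ.filter (fun e => r (insert e A) = r A) with hCdef
  have hAC : A ⊆ C := by
    intro a ha
    simp only [hCdef, Finset.mem_filter, Finset.mem_univ, true_and]
    rw [Finset.insert_eq_self.2 ha]
  have hCA : r C = r A := by
    have : r (A ∪ C) = r A := by
      apply r_span r hrmono hrsub
      intro e he
      simpa [hCdef] using he
    rwa [Finset.union_eq_right.2 hAC] at this
  have hm_nonneg : ∀ e, (0:ℝ) ≤ (r (insert e A) : ℝ) - (r A : ℝ) := by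
    intro e
    have := hrmono A e
    have : (r A : ℝ) ≤ (r (insert e A) : ℝ) := by exact_mod_cast this
    linarith
  have hm_one : ∀ e ∈ Cᶜ, (r (insert e A) : ℝ) - (r A : ℝ) = 1 := by
    intro e he
    have hne : r (insert e A) ≠ r A := by
      simp only [hCdef, Finset.mem_compl, Finset.mem_filter, Finset.mem_univ, true_and] at he
      exact he
    have h1 := hrmono A e
    have h2 := hrunit A e
    have : r (insert e A) = r A + 1 := by omega
    rw [this]; push_cast; ring
  have step1 : ∑ e ∈ Cᶜ, z e * ((r (insert e A) : ℝ) - (r A : ℝ))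
      ≤ ∑ e, z e * ((r (insert e A) : ℝ) - (r A : ℝ)) := by
    apply Finset.sum_le_sum_of_subset_of_nonneg (Finset.subset_univ _)
    intro e _ _
    exact mul_nonneg (hz0 e) (hm_nonneg e)
  have step2 : ∑ e ∈ Cᶜ, z e * ((r (insert e A) : ℝ) - (r A : ℝ)) = ∑ e ∈ Cᶜ, z e :=
    Finset.sum_congr rfl fun e he => by rw [hm_one e he, mul_one]
  have step3 : ∑ e ∈ C, z e + ∑ e ∈ Cᶜ, z e = ∑ e, z e := Finset.sum_add_sum_compl C z
  have step4 : ∑ e ∈ C, z e ≤ (r C : ℝ) := hzT C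
  have hCA' : (r C : ℝ) = (r A : ℝ) := by exact_mod_cast hCA
  calc (r Finset.univ : ℝ) - (r A : ℝ)
      = ∑ e, z e - (r A : ℝ) := by rw [hzS]
    _ ≤ ∑ e ∈ Cᶜ, z e := by rw [← step3]; linarith [step4, hCA']
    _ = ∑ e ∈ Cᶜ, z e * ((r (insert e A) : ℝ) - (r A : ℝ)) := step2.symm
    _ ≤ _ := step1


noncomputable def F (r : Finset α → ℕ) (x : α → ℝ) : ℝ :=
  ∑ A : Finset α, wt x A * (r A : ℝ)

lemma F_onecoord (r : Finset α → ℕ)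
    (hrmono : ∀ (T : Finset α) (e : α), r T ≤ r (insert e T))
    (x y : α → ℝ) (hx0 : ∀ e, 0 ≤ x e) (hx1 : ∀ e, x e ≤ 1)
    (f : α) (hagree : ∀ e, e ≠ f → x e = y e) (hf : x f ≤ y f) :
    F r x ≤ F r y := by
  rw [F, F, sum_pair f (fun A => wt x A * (r A : ℝ)),
    sum_pair f (fun A => wt y A * (r A : ℝ))]
  apply Finset.sum_le_sum
  intro A hA
  have hfA : f ∉ A := by simpa using hA
  have hW : (∏ g ∈ A, x g) * ∏ g ∈ Aᶜ.erase f, (1 - x g)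
      = (∏ g ∈ A, y g) * ∏ g ∈ Aᶜ.erase f, (1 - y g) := by
    congr 1
    · exact Finset.prod_congr rfl fun g hg => hagree g (fun h => hfA (h ▸ hg))
    · refine Finset.prod_congr rfl fun g hg => ?_
      rw [hagree g (Finset.ne_of_mem_erase hg)]
  set W : ℝ := (∏ g ∈ A, x g) * ∏ g ∈ Aᶜ.erase f, (1 - x g) with hWdef
  have hWnn : 0 ≤ W := by
    apply mul_nonneg (Finset.prod_nonneg fun g _ => hx0 g)
    exact Finset.prod_nonneg fun g _ => by linarith [hx1 g]
  have hr : (r A : ℝ) ≤ (r (insert f A) : ℝ) := by exact_mod_cast hrmono A f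
  rw [wt_not_mem hfA, wt_insert hfA, wt_not_mem (x := y) hfA, wt_insert (x := y) hfA,
    ← hW, ← hWdef]
  nlinarith [mul_nonneg (mul_nonneg hWnn (sub_nonneg.2 hf)) (sub_nonneg.2 hr)]

lemma F_mono (r : Finset α → ℕ)
    (hrmono : ∀ (T : Finset α) (e : α), r T ≤ r (insert e T))
    (q p : α → ℝ) (hq0 : ∀ e, 0 ≤ q e) (hqp : ∀ e, q e ≤ p e) (hp1 : ∀ e, p e ≤ 1) :
    F r q ≤ F r p := by
  have main : ∀ s : Finset α, F r q ≤ F r (fun e => if e ∈ s then p e else q e) := by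
    intro s
    induction s using Finset.induction_on with
    | empty => simp
    | @insert f s hf ih =>
        refine le_trans ih (F_onecoord r hrmono _ _ ?_ ?_ f ?_ ?_)
        · intro e; by_cases he : e ∈ s <;> simp [he, hq0 e, le_trans (hq0 e) (hqp e)]
        · intro e; by_cases he : e ∈ s <;>
            simp [he, hp1 e, le_trans (hqp e) (hp1 e)]
        · intro e he
          by_cases hes : e ∈ s <;> simp [hes, Finset.mem_insert, he]
        · simp [hf, hqp f]
  have := main univ
  simpa using this

noncomputable def xf (z : α → ℝ) (t : ℝ) (e : α) : ℝ := 1 - Real.exp (-(t * z e))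

lemma prod_exp (z : α → ℝ) (s : ℝ) (B : Finset α) :
    ∏ e ∈ B, Real.exp (-(s * z e)) = Real.exp (-(s * ∑ e ∈ B, z e)) := by
  rw [← Real.exp_sum]
  congr 1
  rw [Finset.mul_sum, ← Finset.sum_neg_distrib]

lemma wt_xf (z : α → ℝ) (t : ℝ) (A : Finset α) :
    wt (xf z t) A
      = (∏ e ∈ A, (1 - Real.exp (-(t * z e)))) * Real.exp (-(t * ∑ e ∈ Aᶜ, z e)) := by
  rw [wt, ← prod_exp]
  congr 1
  exact Finset.prod_congr rfl fun e _ => by rw [xf]; ring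

lemma hasDerivAt_wt (z : α → ℝ) (A : Finset α) (t : ℝ) :
    HasDerivAt (fun s => wt (xf z s) A)
      (∑ e ∈ A, z e * wt (xf z t) (A.erase e) - (∑ e ∈ Aᶜ, z e) * wt (xf z t) A) t := by
  have hb : ∀ e : α, HasDerivAt (fun s => 1 - Real.exp (-(s * z e)))
      (z e * Real.exp (-(t * z e))) t := by
    intro e
    have h1 : HasDerivAt (fun s : ℝ => -(s * z e)) (-(z e)) t := by
      exact ((hasDerivAt_id t).mul_const (z e)).neg.congr_deriv (by ring)
    have h3 := (h1.exp).const_sub 1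
    exact h3.congr_deriv (by ring)
  set S : ℝ := ∑ e ∈ Aᶜ, z e with hS
  have hQ : HasDerivAt (fun s => Real.exp (-(s * S))) (-S * Real.exp (-(t * S))) t := by
    have h1 : HasDerivAt (fun s : ℝ => -(s * S)) (-S) t := by
      exact ((hasDerivAt_id t).mul_const S).neg.congr_deriv (by ring)
    have := h1.exp
    convert this using 1
    ring
  have hP : HasDerivAt (fun s => ∏ e ∈ A, (1 - Real.exp (-(s * z e))))
      (∑ e ∈ A, (∏ f ∈ A.erase e, (1 - Real.exp (-(t * z f)))) * (z e * Real.exp (-(t * z e)))) t := by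
    have := HasDerivAt.fun_finsetProd (u := A) (f := fun e s => 1 - Real.exp (-(s * z e)))
      (f' := fun e => z e * Real.exp (-(t * z e))) (fun e _ => hb e)
    simpa [smul_eq_mul] using this
  have hPQ := hP.mul hQ
  have hfun : (fun s => wt (xf z s) A)
      = fun s => (∏ e ∈ A, (1 - Real.exp (-(s * z e)))) * Real.exp (-(s * S)) :=
    funext fun s => wt_xf z s A
  rw [hfun]
  refine hPQ.congr_deriv ?_
  have hwtA : wt (xf z t) A
      = (∏ e ∈ A, (1 - Real.exp (-(t * z e)))) * Real.exp (-(t * S)) := wt_xf z t A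
  have hterm : ∀ e ∈ A, z e * wt (xf z t) (A.erase e)
      = (∏ f ∈ A.erase e, (1 - Real.exp (-(t * z f)))) * (z e * Real.exp (-(t * z e)))
          * Real.exp (-(t * S)) := by
    intro e he
    have hcompl : (A.erase e)ᶜ = insert e Aᶜ := Finset.compl_erase
    have heAc : e ∉ Aᶜ := by simpa using he
    have hsum : ∑ f ∈ (A.erase e)ᶜ, z f = z e + S := by
      rw [hcompl, Finset.sum_insert heAc]
    rw [wt_xf, hsum, show -(t * (z e + S)) = -(t * z e) + -(t * S) by ring, Real.exp_add]
    ring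
  rw [Finset.sum_congr rfl hterm, hwtA, ← Finset.sum_mul]
  ring

lemma hasDerivAt_F (r : Finset α → ℕ) (z : α → ℝ) (t : ℝ) :
    HasDerivAt (fun s => F r (xf z s))
      (∑ A : Finset α,
        (∑ e ∈ A, z e * wt (xf z t) (A.erase e) - (∑ e ∈ Aᶜ, z e) * wt (xf z t) A) * (r A : ℝ)) t :=
  HasDerivAt.fun_sum fun A _ => (hasDerivAt_wt z A t).mul_const _

lemma D_eq (r : Finset α → ℕ) (z x : α → ℝ) :
    ∑ A : Finset α, (∑ e ∈ A, z e * wt x (A.erase e) - (∑ e ∈ Aᶜ, z e) * wt x A) * (r A : ℝ)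
      = ∑ A : Finset α, wt x A * (∑ e, z e * ((r (insert e A) : ℝ) - (r A : ℝ))) := by
  have expand : ∀ A : Finset α,
      (∑ e ∈ A, z e * wt x (A.erase e) - (∑ e ∈ Aᶜ, z e) * wt x A) * (r A : ℝ)
        = ∑ e, ((if e ∈ A then z e * wt x (A.erase e) else 0)
            - (if e ∈ Aᶜ then z e else 0) * wt x A) * (r A : ℝ) := by
    intro A
    have h1 : ∑ e ∈ A, z e * wt x (A.erase e)
        = ∑ e, if e ∈ A then z e * wt x (A.erase e) else 0 := by
      rw [Finset.sum_ite_mem, Finset.univ_inter]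
    have h2 : ∑ e ∈ Aᶜ, z e = ∑ e, if e ∈ Aᶜ then z e else 0 := by
      rw [Finset.sum_ite_mem, Finset.univ_inter]
    rw [h1, h2, eq_comm]
    calc ∑ e, ((if e ∈ A then z e * wt x (A.erase e) else 0)
            - (if e ∈ Aᶜ then z e else 0) * wt x A) * (r A : ℝ)
        = ∑ e, ((if e ∈ A then z e * wt x (A.erase e) else 0) * (r A : ℝ)
            - (if e ∈ Aᶜ then z e else 0) * (wt x A * (r A : ℝ))) :=
          Finset.sum_congr rfl fun e _ => by ring
      _ = (∑ e, if e ∈ A then z e * wt x (A.erase e) else 0) * (r A : ℝ)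
            - (∑ e, if e ∈ Aᶜ then z e else 0) * (wt x A * (r A : ℝ)) := by
          rw [Finset.sum_sub_distrib, Finset.sum_mul, Finset.sum_mul]
      _ = _ := by ring
  rw [Finset.sum_congr rfl fun A _ => expand A]
  conv_lhs => rw [Finset.sum_comm]
  have mulsum : ∀ A : Finset α,
      wt x A * (∑ e, z e * ((r (insert e A) : ℝ) - (r A : ℝ)))
        = ∑ e, wt x A * (z e * ((r (insert e A) : ℝ) - (r A : ℝ))) := fun A => Finset.mul_sum _ _ _
  rw [Finset.sum_congr rfl fun A _ => mulsum A]
  conv_rhs => rw [Finset.sum_comm]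
  apply Finset.sum_congr rfl
  intro e _
  have split : ∀ A : Finset α,
      ((if e ∈ A then z e * wt x (A.erase e) else 0)
          - (if e ∈ Aᶜ then z e else 0) * wt x A) * (r A : ℝ)
        = (if e ∈ A then z e * wt x (A.erase e) * (r A : ℝ) else 0)
          - (if e ∉ A then z e * wt x A * (r A : ℝ) else 0) := by
    intro A
    by_cases he : e ∈ A <;> simp [he] <;> ring
  rw [Finset.sum_congr rfl fun A _ => split A, Finset.sum_sub_distrib]
  have hs1 : ∑ A : Finset α, (if e ∈ A then z e * wt x (A.erase e) * (r A : ℝ) else 0)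
      = ∑ A ∈ univ.filter (fun A : Finset α => e ∈ A), z e * wt x (A.erase e) * (r A : ℝ) :=
    (Finset.sum_filter _ _).symm
  have hs2 : ∑ A : Finset α, (if e ∉ A then z e * wt x A * (r A : ℝ) else 0)
      = ∑ A ∈ univ.filter (fun A : Finset α => e ∉ A), z e * wt x A * (r A : ℝ) :=
    (Finset.sum_filter _ _).symm
  rw [hs1, hs2, sum_insert_bij e (fun A => z e * wt x (A.erase e) * (r A : ℝ))]
  have hbij : ∑ B ∈ univ.filter (fun B : Finset α => e ∉ B),
        z e * wt x ((insert e B).erase e) * ((r (insert e B) : ℝ))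
      = ∑ B ∈ univ.filter (fun B : Finset α => e ∉ B),
        z e * wt x B * ((r (insert e B) : ℝ)) := by
    apply Finset.sum_congr rfl
    intro B hB
    have heB : e ∉ B := by simpa using hB
    rw [Finset.erase_insert heB]
  rw [hbij, ← Finset.sum_sub_distrib]
  rw [← Finset.sum_filter_add_sum_filter_not univ (fun A : Finset α => e ∉ A)
    (fun A => wt x A * (z e * ((r (insert e A) : ℝ) - (r A : ℝ))))]
  have hzero : ∑ A ∈ univ.filter (fun A : Finset α => ¬ e ∉ A),
      wt x A * (z e * ((r (insert e A) : ℝ) - (r A : ℝ))) = 0 := by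
    apply Finset.sum_eq_zero
    intro A hA
    have heA : e ∈ A := by simpa using hA
    rw [Finset.insert_eq_self.2 heA]
    simp
  rw [hzero, add_zero]
  exact Finset.sum_congr rfl fun A _ => by ring

end Stmt10Aux

open Stmt10Aux in

/-- Let `r` be the rank function of a matroid on ground set `S` and `y` a
point in the up-hull of the base polymatroid. For `β ≥ 1`, sampling each element `e`
independently with probability `min 1 (β y_e)` yields a random set of expected rank at
least `(1 - e^{-β}) r(S)`. -/
theorem stmt10 {α : Type*} [Fintype α] [DecidableEq α]
    (r : Finset α → ℕ)
    (hr0 : r ∅ = 0)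
    (hrmono : ∀ (T : Finset α) (e : α), r T ≤ r (insert e T))
    (hrunit : ∀ (T : Finset α) (e : α), r (insert e T) ≤ r T + 1)
    (hrsub : ∀ T₁ T₂ : Finset α, r (T₁ ∪ T₂) + r (T₁ ∩ T₂) ≤ r T₁ + r T₂)
    (y : α → ℝ) (β : ℝ) (hβ : 1 ≤ β)
    (hup : ∃ z : α → ℝ, (∀ e, 0 ≤ z e) ∧ (∀ e, z e ≤ y e)
        ∧ (∀ T : Finset α, ∑ e ∈ T, z e ≤ (r T : ℝ))
        ∧ (∑ e, z e = (r Finset.univ : ℝ))) :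
    (1 - Real.exp (-β)) * (r Finset.univ : ℝ)
      ≤ ∑ A : Finset α,
          ((∏ e ∈ A, min 1 (β * y e)) * (∏ e ∈ Aᶜ, (1 - min 1 (β * y e))))
            * (r A : ℝ) := by
  classical
  obtain ⟨z, hz0, hzy, hzT, hzS⟩ := hup
  have hβ0 : (0:ℝ) ≤ β := by linarith
  set rS : ℝ := (r Finset.univ : ℝ) with hrS
  set p : α → ℝ := fun e => min 1 (β * y e) with hp
  have htarget : ∑ A : Finset α,
      ((∏ e ∈ A, min 1 (β * y e)) * (∏ e ∈ Aᶜ, (1 - min 1 (β * y e)))) * (r A : ℝ)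
        = F r p := rfl
  rw [htarget]
  set g : ℝ → ℝ := fun s => F r (xf z s) with hg
  set D : ℝ → ℝ := fun t => ∑ A : Finset α,
      (∑ e ∈ A, z e * wt (xf z t) (A.erase e)
        - (∑ e ∈ Aᶜ, z e) * wt (xf z t) A) * (r A : ℝ) with hD
  have hDg : ∀ t, HasDerivAt g (D t) t := fun t => hasDerivAt_F r z t
  set H : ℝ → ℝ := fun s => Real.exp s * g s - (Real.exp s - 1) * rS with hHdef
  have hH : ∀ t, HasDerivAt H (Real.exp t * g t + Real.exp t * D t - Real.exp t * rS) t := by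
    intro t
    have h1 := (Real.hasDerivAt_exp t).mul (hDg t)
    have h2 := ((Real.hasDerivAt_exp t).sub_const 1).mul_const rS
    have h3 := h1.sub h2
    exact h3
  have hxf0 : ∀ t, 0 ≤ t → ∀ e, 0 ≤ xf z t e := by
    intro t ht e
    have h1 : Real.exp (-(t * z e)) ≤ 1 := by
      rw [Real.exp_le_one_iff]
      have := mul_nonneg ht (hz0 e)
      linarith
    rw [xf]; linarith
  have hxf1 : ∀ t e, xf z t e ≤ 1 := by
    intro t e
    have := Real.exp_pos (-(t * z e))
    rw [xf]; linarith
  have hDge : ∀ t, 0 ≤ t → rS - g t ≤ D t := by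
    intro t ht
    have hDeq : D t = ∑ A : Finset α,
        wt (xf z t) A * (∑ e, z e * ((r (insert e A) : ℝ) - (r A : ℝ))) := D_eq r z (xf z t)
    have h1 : ∑ A : Finset α, wt (xf z t) A * (rS - (r A : ℝ))
        ≤ ∑ A : Finset α, wt (xf z t) A * (∑ e, z e * ((r (insert e A) : ℝ) - (r A : ℝ))) := by
      apply Finset.sum_le_sum
      intro A _
      apply mul_le_mul_of_nonneg_left _ (wt_nonneg (hxf0 t ht) (hxf1 t) A)
      exact key_ineq r hrmono hrunit hrsub z hz0 hzT hzS A
    have h2 : ∑ A : Finset α, wt (xf z t) A * (rS - (r A : ℝ)) = rS - g t := by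
      calc ∑ A : Finset α, wt (xf z t) A * (rS - (r A : ℝ))
          = ∑ A : Finset α, (wt (xf z t) A * rS - wt (xf z t) A * (r A : ℝ)) :=
            Finset.sum_congr rfl fun A _ => by ring
        _ = (∑ A : Finset α, wt (xf z t) A) * rS - ∑ A : Finset α, wt (xf z t) A * (r A : ℝ) := by
            rw [Finset.sum_sub_distrib, Finset.sum_mul]
        _ = rS - g t := by rw [sum_wt]; simp [hg, F]
    rw [hDeq, ← h2]
    exact h1
  have hmono : MonotoneOn H (Set.Icc (0:ℝ) β) := by
    apply monotoneOn_of_deriv_nonneg (convex_Icc 0 β)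
    · exact (Differentiable.continuous fun t => (hH t).differentiableAt).continuousOn
    · intro t _
      exact ((hH t).differentiableAt).differentiableWithinAt
    · intro t ht
      rw [interior_Icc] at ht
      rw [(hH t).deriv]
      have hDt := hDge t ht.1.le
      have hnn : 0 ≤ g t + D t - rS := by linarith
      nlinarith [Real.exp_pos t, mul_nonneg (Real.exp_pos t).le hnn]
  have hH0 : H 0 = g 0 := by simp [hHdef]
  have hg0 : g 0 = 0 := by
    simp only [hg, F]
    apply Finset.sum_eq_zero
    intro A _
    by_cases hA : A = ∅
    · subst hA
      simp [hr0]
    · obtain ⟨e, he⟩ := Finset.nonempty_of_ne_empty hA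
      have hx : xf z 0 e = 0 := by simp [xf]
      rw [wt, Finset.prod_eq_zero he hx]
      simp
  have hmem0 : (0:ℝ) ∈ Set.Icc (0:ℝ) β := by constructor <;> linarith
  have hmemβ : β ∈ Set.Icc (0:ℝ) β := by constructor <;> linarith
  have hHle := hmono hmem0 hmemβ hβ0
  have hstep : (Real.exp β - 1) * rS ≤ Real.exp β * g β := by
    rw [hH0, hg0] at hHle
    simp only [hHdef] at hHle
    linarith
  have hFmono : g β ≤ F r p := by
    apply F_mono r hrmono
    · exact hxf0 β hβ0
    · intro e
      apply le_min
      · have := Real.exp_pos (-(β * z e))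
        rw [xf]; linarith
      · have h1 : -(β * z e) + 1 ≤ Real.exp (-(β * z e)) := Real.add_one_le_exp _
        have h2 : β * z e ≤ β * y e := mul_le_mul_of_nonneg_left (hzy e) hβ0
        rw [xf]; linarith
    · intro e
      exact min_le_left _ _
  have hEpos := Real.exp_pos β
  have hchain : (Real.exp β - 1) * rS ≤ Real.exp β * F r p :=
    le_trans hstep (mul_le_mul_of_nonneg_left hFmono hEpos.le)
  have h4 := mul_le_mul_of_nonneg_left hchain (inv_nonneg.2 hEpos.le)
  rw [show (Real.exp β)⁻¹ * (Real.exp β * F r p) = F r p by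
    rw [← mul_assoc, inv_mul_cancel₀ hEpos.ne', one_mul]] at h4
  rw [Real.exp_neg]
  calc (1 - (Real.exp β)⁻¹) * rS
      = (Real.exp β)⁻¹ * ((Real.exp β - 1) * rS) := by
        rw [← mul_assoc, mul_sub, inv_mul_cancel₀ hEpos.ne', mul_one]
    _ ≤ F r p := h4
end

section
/- Let r be the rank function of a matroid on ground set S and define s(y) = min_{T ⊆ S} ( r(T) + ∑_{e ∈ S∖T} y_e · (r(T∪{e}) − r(T)) ). Then s is concave in y, and for every y in the base polymatroid {y ≥ 0 : y(T) ≤ r(T) ∀T, y(S) = r(S)}, s(y) ≥ r(S). -/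
/-- `s(y) = min_{T ⊆ S} ( r(T) + ∑_{e ∉ T} y_e (r(T ∪ {e}) - r(T)) )`. -/
noncomputable def sFun {α : Type*} [Fintype α] [DecidableEq α]
    (r : Finset α → ℕ) (y : α → ℝ) : ℝ :=
  Finset.inf' Finset.univ ⟨∅, Finset.mem_univ _⟩
    (fun T : Finset α =>
      (r T : ℝ) + ∑ e ∈ Tᶜ, y e * ((r (insert e T) : ℝ) - (r T : ℝ)))

/-- For a matroid rank function `r`, the function `s` is concave, and for
every `y` in the base polymatroid, `s(y) ≥ r(S)`. -/
theorem stmt11 {α : Type*} [Fintype α] [DecidableEq α]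
    (r : Finset α → ℕ)
    (hr0 : r ∅ = 0)
    (hrmono : ∀ (T : Finset α) (e : α), r T ≤ r (insert e T))
    (hrunit : ∀ (T : Finset α) (e : α), r (insert e T) ≤ r T + 1)
    (hrsub : ∀ T₁ T₂ : Finset α, r (T₁ ∪ T₂) + r (T₁ ∩ T₂) ≤ r T₁ + r T₂) :
    ConcaveOn ℝ Set.univ (sFun r)
    ∧ ∀ y : α → ℝ, (∀ e, 0 ≤ y e) → (∀ T : Finset α, ∑ e ∈ T, y e ≤ (r T : ℝ)) →
        (∑ e, y e = (r Finset.univ : ℝ)) → (r Finset.univ : ℝ) ≤ sFun r y := by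
  -- monotonicity along unions
  have hmonoU : ∀ (T Z : Finset α), r T ≤ r (T ∪ Z) := by
    intro T Z
    induction Z using Finset.induction_on with
    | empty => simp
    | @insert e Z he ih =>
      rw [Finset.union_insert]
      exact le_trans ih (hrmono _ _)
  -- spanning lemma
  have hspan : ∀ (T Z : Finset α), (∀ e ∈ Z, r (insert e T) = r T) → r (T ∪ Z) = r T := by
    intro T Z
    induction Z using Finset.induction_on with
    | empty => simp
    | @insert e Z he ih =>
      intro h
      have hZ : r (T ∪ Z) = r T := ih (fun x hx => h x (Finset.mem_insert_of_mem hx))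
      by_cases heT : e ∈ T
      · have : T ∪ insert e Z = T ∪ Z := by
          rw [Finset.union_insert, Finset.insert_eq_self.2 (Finset.mem_union_left _ heT)]
        rw [this, hZ]
      · have hsub := hrsub (T ∪ Z) (insert e T)
        have hinter : (T ∪ Z) ∩ insert e T = T := by
          ext x
          simp only [Finset.mem_inter, Finset.mem_union, Finset.mem_insert]
          constructor
          · rintro ⟨hx1, hx2⟩
            rcases hx2 with rfl | hx2
            · rcases hx1 with h' | h'
              · exact h'
              · exact absurd h' he
            · exact hx2
          · intro hx; exact ⟨Or.inl hx, Or.inr hx⟩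
        have hunion : (T ∪ Z) ∪ insert e T = insert e (T ∪ Z) := by
          ext x
          simp only [Finset.mem_union, Finset.mem_insert]
          tauto
        rw [hunion, hinter, hZ, h e (Finset.mem_insert_self e Z)] at hsub
        have h2 : r (T ∪ Z) ≤ r (insert e (T ∪ Z)) := hrmono _ _
        rw [Finset.union_insert]
        omega
  constructor
  · -- concavity
    refine ⟨convex_univ, ?_⟩
    intro x _ y _ a b ha hb hab
    unfold sFun
    apply Finset.le_inf'
    intro T _
    have hx : sFun r x ≤ (r T : ℝ) + ∑ e ∈ Tᶜ, x e * ((r (insert e T) : ℝ) - (r T : ℝ)) :=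
      Finset.inf'_le _ (Finset.mem_univ T)
    have hy : sFun r y ≤ (r T : ℝ) + ∑ e ∈ Tᶜ, y e * ((r (insert e T) : ℝ) - (r T : ℝ)) :=
      Finset.inf'_le _ (Finset.mem_univ T)
    have h1 := mul_le_mul_of_nonneg_left hx ha
    have h2 := mul_le_mul_of_nonneg_left hy hb
    have hsum : ∑ e ∈ Tᶜ, (a • x + b • y) e * ((r (insert e T) : ℝ) - (r T : ℝ))
        = a * ∑ e ∈ Tᶜ, x e * ((r (insert e T) : ℝ) - (r T : ℝ))
          + b * ∑ e ∈ Tᶜ, y e * ((r (insert e T) : ℝ) - (r T : ℝ)) := by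
      simp only [Pi.add_apply, Pi.smul_apply, smul_eq_mul, add_mul, Finset.sum_add_distrib,
        Finset.mul_sum, mul_assoc]
    rw [hsum]
    have h3 : a * ((r T : ℝ) + ∑ e ∈ Tᶜ, x e * ((r (insert e T) : ℝ) - (r T : ℝ)))
        + b * ((r T : ℝ) + ∑ e ∈ Tᶜ, y e * ((r (insert e T) : ℝ) - (r T : ℝ)))
        = (r T : ℝ) + (a * ∑ e ∈ Tᶜ, x e * ((r (insert e T) : ℝ) - (r T : ℝ))
          + b * ∑ e ∈ Tᶜ, y e * ((r (insert e T) : ℝ) - (r T : ℝ))) := by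
      linear_combination (r T : ℝ) * hab
    unfold sFun at h1 h2
    simp only [smul_eq_mul]
    linarith
  · -- lower bound on the base polymatroid
    intro y hy hyT hyS
    unfold sFun
    apply Finset.le_inf'
    intro T _
    set U : Finset α := Tᶜ.filter (fun e => r (insert e T) ≠ r T) with hUdef
    have hUsum : ∑ e ∈ U, y e ≤ ∑ e ∈ Tᶜ, y e * ((r (insert e T) : ℝ) - (r T : ℝ)) := by
      rw [hUdef, Finset.sum_filter]
      apply Finset.sum_le_sum
      intro e _
      by_cases h : r (insert e T) = r T
      · simp [h]
      · simp only [h, if_pos, ne_eq, not_false_eq_true, if_true]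
        have h1 : r T + 1 ≤ r (insert e T) := by
          have := hrmono T e; omega
        have h1' : (1 : ℝ) ≤ (r (insert e T) : ℝ) - (r T : ℝ) := by
          have : ((r T : ℝ) + 1) ≤ (r (insert e T) : ℝ) := by exact_mod_cast h1
          linarith
        nlinarith [hy e]
    have hUc : Uᶜ = T ∪ Tᶜ.filter (fun e => r (insert e T) = r T) := by
      ext x
      simp only [hUdef, Finset.mem_compl, Finset.mem_filter, Finset.mem_union, ne_eq,
        not_and, not_not]
      by_cases hxT : x ∈ T <;> simp [hxT]
    have hrUc : r Uᶜ = r T := by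
      rw [hUc]
      exact hspan T _ (fun e he => (Finset.mem_filter.1 he).2)
    have h1 : ∑ e ∈ Uᶜ, y e ≤ (r T : ℝ) := by
      have := hyT Uᶜ
      rwa [hrUc] at this
    have h2 : ∑ e ∈ U, y e + ∑ e ∈ Uᶜ, y e = (r Finset.univ : ℝ) := by
      rw [Finset.sum_add_sum_compl, hyS]
    linarith
end
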